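/- Let N be a symmetric negative definite solution of the ARE, set A₊ = A − BR⁻¹BᵀN, and assume there are M ≥ 1 and ν > 0 with ‖exp(−tA₊)‖ ≤ M e^{−νt} for all t ≥ 0. Fix z₁ ∈ ℝⁿ. Then: (a) the pair z_b(t) = exp(−tA₊) z₁, v_b(t) = −R⁻¹BᵀN z_b(t) satisfies ż_b = −A z_b − B v_b, z_b(0) = z₁, z_b(t) → 0 as t → ∞, and ½∫₀^∞ (‖z_b(t)‖²_Q + ‖v_b(t)‖²_R) dt = −½⟨N z₁, z₁⟩; (b) every pair (z, v) with z differentiable, v continuous, ż = −Az − Bv, z(0) = z₁, z(t) → 0 as t → ∞ and t ↦ ‖z(t)‖²_Q + ‖v(t)‖²_R integrable on [0, ∞) satisfies ½∫₀^∞ (‖z(t)‖²_Q + ‖v(t)‖²_R) dt ≥ −½⟨N z₁, z₁⟩. -/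

import Mathlib

open Matrix MeasureTheory

private lemma expDeriv {n : ℕ} (X : Matrix (Fin n) (Fin n) ℝ) (z₁ : Fin n → ℝ) (t : ℝ) :
    HasDerivAt (fun s : ℝ => (NormedSpace.exp (s • X)).mulVec z₁)
      (X.mulVec ((NormedSpace.exp (t • X)).mulVec z₁)) t := by
  letI : NormedRing (Matrix (Fin n) (Fin n) ℝ) := Matrix.linftyOpNormedRing
  letI : NormedAlgebra ℝ (Matrix (Fin n) (Fin n) ℝ) := Matrix.linftyOpNormedAlgebra
  have h := hasDerivAt_exp_smul_const' (𝕂 := ℝ) X t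
  let lin : Matrix (Fin n) (Fin n) ℝ →ₗ[ℝ] (Fin n → ℝ) :=
    { toFun := fun M => M.mulVec z₁
      map_add' := fun M M' => Matrix.add_mulVec M M' z₁
      map_smul' := by intro c M; simp [Matrix.smul_mulVec] }
  have h2 := (lin.toContinuousLinearMap.hasFDerivAt).comp_hasDerivAt t h
  have h3 : lin.toContinuousLinearMap (X * NormedSpace.exp (t • X))
      = X.mulVec ((NormedSpace.exp (t • X)).mulVec z₁) := by
    rw [Matrix.mulVec_mulVec]; rfl
  exact h2.congr_deriv h3

private lemma trDot {n m : ℕ} (P : Matrix (Fin n) (Fin m) ℝ) (x : Fin n → ℝ) (y : Fin m → ℝ) :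
    Pᵀ.mulVec x ⬝ᵥ y = x ⬝ᵥ P.mulVec y := by
  rw [Matrix.mulVec_transpose, dotProduct_mulVec]

private lemma quadDeriv {n : ℕ} (P : Matrix (Fin n) (Fin n) ℝ) {z : ℝ → Fin n → ℝ}
    {z' : Fin n → ℝ} {t : ℝ} (hz : HasDerivAt z z' t) :
    HasDerivAt (fun t => P.mulVec (z t) ⬝ᵥ z t)
      (P.mulVec z' ⬝ᵥ z t + P.mulVec (z t) ⬝ᵥ z') t := by
  have hcoord : ∀ i, HasDerivAt (fun t => z t i) (z' i) t := fun i => hasDerivAt_pi.1 hz i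
  simp only [Matrix.mulVec, dotProduct, ← Finset.sum_add_distrib]
  exact HasDerivAt.fun_sum fun i _ => by
    simpa [mul_comm, Finset.sum_mul, Finset.mul_sum, mul_add, add_comm, Pi.mul_def] using
      ((HasDerivAt.fun_sum (u := Finset.univ) (fun j _ => (hcoord j).const_mul (P i j))).mul (hcoord i))

private lemma dotSelf_nonneg {n : ℕ} (x : Fin n → ℝ) : 0 ≤ x ⬝ᵥ x :=
  Finset.sum_nonneg fun i _ => mul_self_nonneg (x i)

private lemma quadCont {n : ℕ} (P : Matrix (Fin n) (Fin n) ℝ) :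
    Continuous (fun x : Fin n → ℝ => P.mulVec x ⬝ᵥ x) := by
  simp only [Matrix.mulVec, dotProduct]
  exact continuous_finset_sum _ fun i _ =>
    (continuous_finset_sum _ fun j _ => (continuous_const.mul (continuous_apply j))).mul
      (continuous_apply i)

private lemma dotSelfCont {n : ℕ} : Continuous (fun x : Fin n → ℝ => x ⬝ᵥ x) := by
  have := quadCont (1 : Matrix (Fin n) (Fin n) ℝ)
  simpa [Matrix.one_mulVec] using this

private lemma abs_le_sqrt_dot {n : ℕ} (x : Fin n → ℝ) (i : Fin n) :
    |x i| ≤ Real.sqrt (x ⬝ᵥ x) := by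
  rw [← Real.sqrt_sq_eq_abs]
  apply Real.sqrt_le_sqrt
  have : (x i)^2 ≤ ∑ j, (x j)^2 :=
    Finset.single_le_sum (f := fun j => (x j)^2) (fun j _ => sq_nonneg _) (Finset.mem_univ i)
  simpa [dotProduct, sq] using this

private lemma dotSelf_eq_zero {n : ℕ} {x : Fin n → ℝ} (hx : x ⬝ᵥ x = 0) : x = 0 := by
  funext i
  have h1 := abs_le_sqrt_dot x i
  rw [hx] at h1
  simpa using abs_nonpos_iff.mp (by simpa using h1)

private lemma sphereCompact {n : ℕ} :
    IsCompact {x : Fin n → ℝ | x ⬝ᵥ x = 1} := by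
  apply Metric.isCompact_of_isClosed_isBounded
  · exact isClosed_eq dotSelfCont continuous_const
  · rw [Metric.isBounded_iff_subset_closedBall 0]
    refine ⟨1, fun x hx => ?_⟩
    simp only [Metric.mem_closedBall, dist_zero_right]
    have hb : ∀ i, |x i| ≤ 1 := by
      intro i
      have := abs_le_sqrt_dot x i
      rw [Set.mem_setOf_eq.mp hx] at this
      simpa using this
    exact (pi_norm_le_iff_of_nonneg zero_le_one).2 fun i => by
      simpa [Real.norm_eq_abs] using hb i

private lemma quadBoundAbs {n : ℕ} (P : Matrix (Fin n) (Fin n) ℝ) :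
    ∃ C : ℝ, 0 ≤ C ∧ ∀ x : Fin n → ℝ, |P.mulVec x ⬝ᵥ x| ≤ C * (x ⬝ᵥ x) := by
  rcases Nat.eq_zero_or_pos n with hn | hn
  · subst hn
    exact ⟨0, le_refl 0, fun x => by simp [dotProduct]⟩
  by_cases hS : ({x : Fin n → ℝ | x ⬝ᵥ x = 1} : Set _).Nonempty
  · obtain ⟨u, hu, hmax⟩ := sphereCompact.exists_isMaxOn hS (quadCont P).abs.continuousOn
    refine ⟨|P.mulVec u ⬝ᵥ u|, abs_nonneg _, fun x => ?_⟩
    by_cases hx : x ⬝ᵥ x = 0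
    · simp [dotSelf_eq_zero hx]
    · have hpos : 0 < x ⬝ᵥ x := lt_of_le_of_ne (dotSelf_nonneg x) (Ne.symm hx)
      set r := Real.sqrt (x ⬝ᵥ x) with hr
      have hrpos : 0 < r := Real.sqrt_pos.2 hpos
      have hrsq : r * r = x ⬝ᵥ x := Real.mul_self_sqrt hpos.le
      have hmem : (r⁻¹ • x) ⬝ᵥ (r⁻¹ • x) = 1 := by
        rw [smul_dotProduct, dotProduct_smul, smul_eq_mul, smul_eq_mul]
        field_simp [← hrsq]
        rw [sq, hrsq]
      have hle : |P.mulVec (r⁻¹ • x) ⬝ᵥ (r⁻¹ • x)| ≤ |P.mulVec u ⬝ᵥ u| := hmax hmem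
      have hscale : P.mulVec (r⁻¹ • x) ⬝ᵥ (r⁻¹ • x) = (r⁻¹ * r⁻¹) * (P.mulVec x ⬝ᵥ x) := by
        rw [Matrix.mulVec_smul, smul_dotProduct, dotProduct_smul]
        simp [mul_assoc]
      have h2 : |P.mulVec x ⬝ᵥ x| = (x ⬝ᵥ x) * |P.mulVec (r⁻¹ • x) ⬝ᵥ (r⁻¹ • x)| := by
        rw [hscale, abs_mul, abs_of_nonneg (by positivity : (0:ℝ) ≤ r⁻¹ * r⁻¹)]
        field_simp [← hrsq]
        rw [sq, hrsq]
      rw [h2, mul_comm]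
      exact mul_le_mul_of_nonneg_right hle (dotSelf_nonneg x)
  · exfalso
    apply hS
    refine ⟨Pi.single ⟨0, hn⟩ 1, ?_⟩
    simp [dotProduct, Pi.single_apply]

private lemma psdNonneg {n : ℕ} {P : Matrix (Fin n) (Fin n) ℝ} (h : P.PosSemidef)
    (x : Fin n → ℝ) : 0 ≤ P.mulVec x ⬝ᵥ x := by
  have := h.dotProduct_mulVec_nonneg x
  simpa [dotProduct_comm, star_trivial] using this

private lemma pdPos {n : ℕ} {P : Matrix (Fin n) (Fin n) ℝ} (h : P.PosDef)
    {x : Fin n → ℝ} (hx : x ≠ 0) : 0 < P.mulVec x ⬝ᵥ x := by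
  have := h.dotProduct_mulVec_pos hx
  simpa [dotProduct_comm, star_trivial] using this

private lemma pdLower {n : ℕ} (hn : 1 ≤ n) {P : Matrix (Fin n) (Fin n) ℝ} (h : P.PosDef) :
    ∃ c : ℝ, 0 < c ∧ ∀ x : Fin n → ℝ, c * (x ⬝ᵥ x) ≤ P.mulVec x ⬝ᵥ x := by
  have hS : ({x : Fin n → ℝ | x ⬝ᵥ x = 1} : Set _).Nonempty := by
    refine ⟨Pi.single ⟨0, hn⟩ 1, ?_⟩
    simp [dotProduct, Pi.single_apply]
  obtain ⟨u, hu, hmin⟩ := sphereCompact.exists_isMinOn hS (quadCont P).continuousOn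
  have hune : u ≠ 0 := by
    intro h0
    rw [Set.mem_setOf_eq, h0] at hu
    simp at hu
  refine ⟨P.mulVec u ⬝ᵥ u, pdPos h hune, fun x => ?_⟩
  by_cases hx : x ⬝ᵥ x = 0
  · simp [dotSelf_eq_zero hx, hx]
  · have hpos : 0 < x ⬝ᵥ x := lt_of_le_of_ne (dotSelf_nonneg x) (Ne.symm hx)
    set r := Real.sqrt (x ⬝ᵥ x) with hr
    have hrpos : 0 < r := Real.sqrt_pos.2 hpos
    have hrsq : r * r = x ⬝ᵥ x := Real.mul_self_sqrt hpos.le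
    have hmem : (r⁻¹ • x) ⬝ᵥ (r⁻¹ • x) = 1 := by
      rw [smul_dotProduct, dotProduct_smul, smul_eq_mul, smul_eq_mul]
      field_simp [← hrsq]
      rw [sq, hrsq]
    have hle : P.mulVec u ⬝ᵥ u ≤ P.mulVec (r⁻¹ • x) ⬝ᵥ (r⁻¹ • x) := hmin hmem
    have hscale : P.mulVec (r⁻¹ • x) ⬝ᵥ (r⁻¹ • x) = (r⁻¹ * r⁻¹) * (P.mulVec x ⬝ᵥ x) := by
      rw [Matrix.mulVec_smul, smul_dotProduct, dotProduct_smul]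
      simp [mul_assoc]
    rw [hscale] at hle
    have h2 : (P.mulVec u ⬝ᵥ u) * (x ⬝ᵥ x) ≤ ((r⁻¹ * r⁻¹) * (P.mulVec x ⬝ᵥ x)) * (x ⬝ᵥ x) :=
      mul_le_mul_of_nonneg_right hle (dotSelf_nonneg x)
    calc (P.mulVec u ⬝ᵥ u) * (x ⬝ᵥ x) ≤ ((r⁻¹ * r⁻¹) * (P.mulVec x ⬝ᵥ x)) * (x ⬝ᵥ x) := h2
      _ = P.mulVec x ⬝ᵥ x := by
          rw [← hrsq]
          field_simp

private lemma psdAddBound {n : ℕ} {P : Matrix (Fin n) (Fin n) ℝ} (h : P.PosSemidef)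
    (a b : Fin n → ℝ) :
    P.mulVec (a + b) ⬝ᵥ (a + b) ≤ 2 * (P.mulVec a ⬝ᵥ a) + 2 * (P.mulVec b ⬝ᵥ b) := by
  have h1 := psdNonneg h (a - b)
  simp only [Matrix.mulVec_add, Matrix.mulVec_sub, add_dotProduct,
    sub_dotProduct, dotProduct_add, dotProduct_sub] at h1 ⊢
  linarith

/-- the Riccati feedback solves the backward stabilization problem with optimal
value `−½⟨N z₁, z₁⟩`, and this value is a lower bound for all admissible pairs.
The operator norm bound `‖exp(−tA₊)‖ ≤ M e^{-νt}` (Euclidean operator norm) is expressed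
through the action on vectors, with the Euclidean norm written as `√(x ⬝ᵥ x)`. -/
theorem backward_stabilization_optimal
    (n m : ℕ) (hn : 1 ≤ n) (hm : 1 ≤ m)
    (A : Matrix (Fin n) (Fin n) ℝ) (B : Matrix (Fin n) (Fin m) ℝ)
    (Q : Matrix (Fin n) (Fin n) ℝ) (hQ : Q.PosDef)
    (R : Matrix (Fin m) (Fin m) ℝ) (hR : R.PosDef)
    (N : Matrix (Fin n) (Fin n) ℝ) (hN : (-N).PosDef) (hNsymm : Nᵀ = N)
    (hARE : Aᵀ * N + N * A - N * B * R⁻¹ * Bᵀ * N = -Q)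
    (M ν : ℝ) (hM : 1 ≤ M) (hν : 0 < ν)
    (hstab : ∀ t : ℝ, 0 ≤ t → ∀ x : Fin n → ℝ,
      Real.sqrt ((NormedSpace.exp ((-t) • (A - B * R⁻¹ * Bᵀ * N))).mulVec x ⬝ᵥ
          (NormedSpace.exp ((-t) • (A - B * R⁻¹ * Bᵀ * N))).mulVec x)
        ≤ M * Real.exp (-ν * t) * Real.sqrt (x ⬝ᵥ x))
    (z₁ : Fin n → ℝ) :
    -- (a) optimality of the feedback pair
    ((∀ t ∈ Set.Ici (0 : ℝ),
        HasDerivWithinAt (fun s => (NormedSpace.exp ((-s) • (A - B * R⁻¹ * Bᵀ * N))).mulVec z₁)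
          (-(A.mulVec ((NormedSpace.exp ((-t) • (A - B * R⁻¹ * Bᵀ * N))).mulVec z₁))
            - B.mulVec (-(R⁻¹ * Bᵀ * N).mulVec
                ((NormedSpace.exp ((-t) • (A - B * R⁻¹ * Bᵀ * N))).mulVec z₁)))
          (Set.Ici 0) t) ∧
      (NormedSpace.exp ((-(0 : ℝ)) • (A - B * R⁻¹ * Bᵀ * N))).mulVec z₁ = z₁ ∧
      Filter.Tendsto (fun t : ℝ => (NormedSpace.exp ((-t) • (A - B * R⁻¹ * Bᵀ * N))).mulVec z₁)
        Filter.atTop (nhds 0) ∧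
      (1 / 2) * ∫ t in Set.Ioi (0 : ℝ),
          (Q.mulVec ((NormedSpace.exp ((-t) • (A - B * R⁻¹ * Bᵀ * N))).mulVec z₁) ⬝ᵥ
              (NormedSpace.exp ((-t) • (A - B * R⁻¹ * Bᵀ * N))).mulVec z₁
            + R.mulVec (-(R⁻¹ * Bᵀ * N).mulVec
                  ((NormedSpace.exp ((-t) • (A - B * R⁻¹ * Bᵀ * N))).mulVec z₁)) ⬝ᵥ
                (-(R⁻¹ * Bᵀ * N).mulVec
                  ((NormedSpace.exp ((-t) • (A - B * R⁻¹ * Bᵀ * N))).mulVec z₁)))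
        = -(1 / 2) * (N.mulVec z₁ ⬝ᵥ z₁))
    ∧
    -- (b) the optimal value is a lower bound
    (∀ z : ℝ → Fin n → ℝ, ∀ v : ℝ → Fin m → ℝ,
      (∀ t ∈ Set.Ici (0 : ℝ),
        HasDerivWithinAt z (-(A.mulVec (z t)) - B.mulVec (v t)) (Set.Ici 0) t) →
      ContinuousOn v (Set.Ici 0) →
      z 0 = z₁ →
      Filter.Tendsto z Filter.atTop (nhds 0) →
      IntegrableOn (fun t => Q.mulVec (z t) ⬝ᵥ z t + R.mulVec (v t) ⬝ᵥ v t) (Set.Ici 0) →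
      -(1 / 2) * (N.mulVec z₁ ⬝ᵥ z₁)
        ≤ (1 / 2) * ∫ t in Set.Ioi (0 : ℝ),
            (Q.mulVec (z t) ⬝ᵥ z t + R.mulVec (v t) ⬝ᵥ v t)) := by
  have h2ν : (0:ℝ) < 2 * ν := by linarith
  set K : Matrix (Fin n) (Fin n) ℝ := A - B * R⁻¹ * Bᵀ * N with hKdef
  set k : Matrix (Fin m) (Fin n) ℝ := R⁻¹ * Bᵀ * N with hkdef
  -- basic matrix facts
  have hRsym : Rᵀ = R := by
    have := hR.1
    rwa [Matrix.IsHermitian, Matrix.conjTranspose_eq_transpose_of_trivial] at this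
  have hRdet : IsUnit R.det := hR.det_pos.ne'.isUnit
  have hRRi : R * R⁻¹ = 1 := Matrix.mul_nonsing_inv R hRdet
  have hRiT : R⁻¹ᵀ = R⁻¹ := by rw [Matrix.transpose_nonsing_inv, hRsym]
  have hG : Q + kᵀ * (R * k) = -(Kᵀ * N + N * K) := by
    have hQe : Q = N * B * R⁻¹ * Bᵀ * N - (Aᵀ * N + N * A) := by
      rw [← neg_neg Q, ← hARE]; abel
    have hcancel : R * (R⁻¹ * (Bᵀ * N)) = Bᵀ * N := by
      rw [← Matrix.mul_assoc, hRRi, Matrix.one_mul]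
    rw [hQe, hkdef, hKdef]
    simp only [Matrix.transpose_sub, Matrix.transpose_mul, Matrix.transpose_transpose,
      hNsymm, hRiT, Matrix.sub_mul, Matrix.mul_sub, Matrix.mul_assoc, hcancel]
    abel
  have hRk : R * k = Bᵀ * N := by
    rw [hkdef, ← Matrix.mul_assoc, ← Matrix.mul_assoc, hRRi, Matrix.one_mul]
  -- quadratic form identities
  have hLb_val : ∀ x : Fin n → ℝ,
      Q.mulVec x ⬝ᵥ x + R.mulVec (-(k.mulVec x)) ⬝ᵥ (-(k.mulVec x))
        = (Q + kᵀ * (R * k)).mulVec x ⬝ᵥ x := by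
    intro x
    have e2 : (kᵀ * (R * k)).mulVec x ⬝ᵥ x = R.mulVec (k.mulVec x) ⬝ᵥ k.mulVec x := by
      rw [← Matrix.mulVec_mulVec, trDot, ← Matrix.mulVec_mulVec]
    simp only [Matrix.add_mulVec, add_dotProduct, Matrix.mulVec_neg,
      neg_dotProduct, dotProduct_neg, neg_neg, e2]
  have hquadA : ∀ x : Fin n → ℝ,
      N.mulVec (-(K.mulVec x)) ⬝ᵥ x + N.mulVec x ⬝ᵥ (-(K.mulVec x))
        = Q.mulVec x ⬝ᵥ x + R.mulVec (-(k.mulVec x)) ⬝ᵥ (-(k.mulVec x)) := by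
    intro x
    have e1 : (Kᵀ * N).mulVec x ⬝ᵥ x = N.mulVec x ⬝ᵥ K.mulVec x := by
      rw [← Matrix.mulVec_mulVec]; exact trDot K (N.mulVec x) x
    have hGx : (Q + kᵀ * (R * k)).mulVec x ⬝ᵥ x = (-(Kᵀ * N + N * K)).mulVec x ⬝ᵥ x := by
      rw [hG]
    rw [hLb_val x, hGx]
    simp only [Matrix.neg_mulVec, Matrix.add_mulVec, neg_dotProduct,
      add_dotProduct, Matrix.mulVec_neg, dotProduct_neg,
      Matrix.mulVec_mulVec, e1]
    ring_nf
  -- derivative of the trajectory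
  have hzb_deriv : ∀ t : ℝ,
      HasDerivAt (fun s : ℝ => (NormedSpace.exp ((-s) • K)).mulVec z₁)
        (-(K.mulVec ((NormedSpace.exp ((-t) • K)).mulVec z₁))) t := by
    intro t
    have h := expDeriv (-K) z₁ t
    have he : ∀ s : ℝ, s • (-K) = (-s) • K := fun s => by rw [smul_neg, neg_smul]
    simp only [he] at h
    simpa [Matrix.neg_mulVec] using h
  have hzb_cont : Continuous (fun t : ℝ => (NormedSpace.exp ((-t) • K)).mulVec z₁) :=
    continuous_iff_continuousAt.2 fun t => (hzb_deriv t).continuousAt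
  have hzb0 : (NormedSpace.exp ((-(0:ℝ)) • K)).mulVec z₁ = z₁ := by
    simp [NormedSpace.exp_zero]
  have hkc : Continuous (fun x : Fin n → ℝ => k.mulVec x) := continuous_pi fun i => by
    simp only [Matrix.mulVec, dotProduct]
    exact continuous_finset_sum _ fun j _ => continuous_const.mul (continuous_apply j)
  have hzb_tendsto : Filter.Tendsto (fun t : ℝ => (NormedSpace.exp ((-t) • K)).mulVec z₁)
      Filter.atTop (nhds 0) := by
    rw [tendsto_pi_nhds]
    intro i
    have hg : Filter.Tendsto (fun t : ℝ => (M * Real.sqrt (z₁ ⬝ᵥ z₁)) * Real.exp (-(ν * t)))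
        Filter.atTop (nhds 0) := by
      have h1 : Filter.Tendsto (fun t : ℝ => ν * t) Filter.atTop Filter.atTop :=
        Filter.tendsto_id.const_mul_atTop hν
      have h2 := (Real.tendsto_exp_neg_atTop_nhds_zero).comp h1
      have h3 := h2.const_mul (M * Real.sqrt (z₁ ⬝ᵥ z₁))
      simpa [Function.comp] using h3
    simp only [Pi.zero_apply]
    apply squeeze_zero_norm' _ hg
    filter_upwards [Filter.eventually_ge_atTop (0:ℝ)] with t ht
    calc ‖(NormedSpace.exp ((-t) • K)).mulVec z₁ i‖
        = |(NormedSpace.exp ((-t) • K)).mulVec z₁ i| := Real.norm_eq_abs _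
      _ ≤ Real.sqrt ((NormedSpace.exp ((-t) • K)).mulVec z₁ ⬝ᵥ
            (NormedSpace.exp ((-t) • K)).mulVec z₁) := abs_le_sqrt_dot _ i
      _ ≤ M * Real.exp (-ν * t) * Real.sqrt (z₁ ⬝ᵥ z₁) := hstab t ht z₁
      _ = (M * Real.sqrt (z₁ ⬝ᵥ z₁)) * Real.exp (-(ν * t)) := by ring
  have hdecay : ∀ t : ℝ, 0 ≤ t →
      ((NormedSpace.exp ((-t) • K)).mulVec z₁ ⬝ᵥ (NormedSpace.exp ((-t) • K)).mulVec z₁)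
        ≤ M^2 * (z₁ ⬝ᵥ z₁) * Real.exp (-(2*ν*t)) := by
    intro t ht
    have h := hstab t ht z₁
    have h0 : 0 ≤ (NormedSpace.exp ((-t) • K)).mulVec z₁ ⬝ᵥ
        (NormedSpace.exp ((-t) • K)).mulVec z₁ := dotSelf_nonneg _
    have hexp : Real.exp (-ν*t) * Real.exp (-ν*t) = Real.exp (-(2*ν*t)) := by
      rw [← Real.exp_add]; congr 1; ring
    have hsq : Real.sqrt (z₁ ⬝ᵥ z₁) ^ 2 = z₁ ⬝ᵥ z₁ := Real.sq_sqrt (dotSelf_nonneg z₁)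
    calc (NormedSpace.exp ((-t) • K)).mulVec z₁ ⬝ᵥ (NormedSpace.exp ((-t) • K)).mulVec z₁
        = (Real.sqrt ((NormedSpace.exp ((-t) • K)).mulVec z₁ ⬝ᵥ
            (NormedSpace.exp ((-t) • K)).mulVec z₁))^2 := (Real.sq_sqrt h0).symm
      _ ≤ (M * Real.exp (-ν * t) * Real.sqrt (z₁ ⬝ᵥ z₁))^2 :=
          pow_le_pow_left₀ (Real.sqrt_nonneg _) h 2
      _ = M^2 * (z₁ ⬝ᵥ z₁) * Real.exp (-(2*ν*t)) := by
          rw [mul_pow, mul_pow, hsq, pow_two (Real.exp (-ν*t)), hexp]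
          ring
  obtain ⟨Cq, hCq0, hCq⟩ := quadBoundAbs (Q + kᵀ * (R * k))
  have hLb_nonneg : ∀ x : Fin n → ℝ,
      0 ≤ Q.mulVec x ⬝ᵥ x + R.mulVec (-(k.mulVec x)) ⬝ᵥ (-(k.mulVec x)) := fun x =>
    add_nonneg (psdNonneg hQ.posSemidef x) (psdNonneg hR.posSemidef _)
  have hgint : Integrable (fun t : ℝ => (Cq * (M^2 * (z₁ ⬝ᵥ z₁))) * Real.exp (-(2*ν*t)))
      (volume.restrict (Set.Ioi 0)) := by
    have h := (exp_neg_integrableOn_Ioi 0 h2ν).const_mul (Cq * (M^2 * (z₁ ⬝ᵥ z₁)))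
    simp only [neg_mul] at h
    exact h
  have hLbcont : Continuous (fun t : ℝ =>
      Q.mulVec ((NormedSpace.exp ((-t) • K)).mulVec z₁) ⬝ᵥ
          (NormedSpace.exp ((-t) • K)).mulVec z₁
        + R.mulVec (-(k.mulVec ((NormedSpace.exp ((-t) • K)).mulVec z₁))) ⬝ᵥ
            (-(k.mulVec ((NormedSpace.exp ((-t) • K)).mulVec z₁)))) := by
    have he : (fun t : ℝ =>
        Q.mulVec ((NormedSpace.exp ((-t) • K)).mulVec z₁) ⬝ᵥ
            (NormedSpace.exp ((-t) • K)).mulVec z₁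
          + R.mulVec (-(k.mulVec ((NormedSpace.exp ((-t) • K)).mulVec z₁))) ⬝ᵥ
              (-(k.mulVec ((NormedSpace.exp ((-t) • K)).mulVec z₁))))
        = fun t : ℝ => (Q + kᵀ * (R * k)).mulVec ((NormedSpace.exp ((-t) • K)).mulVec z₁) ⬝ᵥ
            (NormedSpace.exp ((-t) • K)).mulVec z₁ := funext fun t => hLb_val _
    rw [he]
    exact (quadCont _).comp hzb_cont
  have hint : IntegrableOn (fun t : ℝ =>
      Q.mulVec ((NormedSpace.exp ((-t) • K)).mulVec z₁) ⬝ᵥ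
          (NormedSpace.exp ((-t) • K)).mulVec z₁
        + R.mulVec (-(k.mulVec ((NormedSpace.exp ((-t) • K)).mulVec z₁))) ⬝ᵥ
            (-(k.mulVec ((NormedSpace.exp ((-t) • K)).mulVec z₁)))) (Set.Ioi 0) := by
    apply Integrable.mono' hgint hLbcont.aestronglyMeasurable
    filter_upwards [ae_restrict_mem measurableSet_Ioi] with t ht
    rw [Real.norm_eq_abs, abs_of_nonneg (hLb_nonneg _), hLb_val _]
    calc (Q + kᵀ * (R * k)).mulVec ((NormedSpace.exp ((-t) • K)).mulVec z₁) ⬝ᵥ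
          (NormedSpace.exp ((-t) • K)).mulVec z₁
        ≤ |(Q + kᵀ * (R * k)).mulVec ((NormedSpace.exp ((-t) • K)).mulVec z₁) ⬝ᵥ
            (NormedSpace.exp ((-t) • K)).mulVec z₁| := le_abs_self _
      _ ≤ Cq * ((NormedSpace.exp ((-t) • K)).mulVec z₁ ⬝ᵥ
            (NormedSpace.exp ((-t) • K)).mulVec z₁) := hCq _
      _ ≤ Cq * (M^2 * (z₁ ⬝ᵥ z₁) * Real.exp (-(2*ν*t))) :=
          mul_le_mul_of_nonneg_left (hdecay t (le_of_lt (Set.mem_Ioi.mp ht))) hCq0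
      _ = (Cq * (M^2 * (z₁ ⬝ᵥ z₁))) * Real.exp (-(2*ν*t)) := by ring
  obtain ⟨Cn, hCn0, hCn⟩ := quadBoundAbs N
  have hftend : Filter.Tendsto
      (fun t : ℝ => N.mulVec ((NormedSpace.exp ((-t) • K)).mulVec z₁) ⬝ᵥ
        (NormedSpace.exp ((-t) • K)).mulVec z₁) Filter.atTop (nhds 0) := by
    have h := ((quadCont N).tendsto 0).comp hzb_tendsto
    simpa only [Function.comp_def, Matrix.mulVec_zero, dotProduct_zero] using h
  have hfd : ∀ t : ℝ,
      HasDerivAt (fun s : ℝ => N.mulVec ((NormedSpace.exp ((-s) • K)).mulVec z₁) ⬝ᵥ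
        (NormedSpace.exp ((-s) • K)).mulVec z₁)
        (Q.mulVec ((NormedSpace.exp ((-t) • K)).mulVec z₁) ⬝ᵥ
            (NormedSpace.exp ((-t) • K)).mulVec z₁
          + R.mulVec (-(k.mulVec ((NormedSpace.exp ((-t) • K)).mulVec z₁))) ⬝ᵥ
              (-(k.mulVec ((NormedSpace.exp ((-t) • K)).mulVec z₁)))) t := by
    intro t
    have h := quadDeriv N (hzb_deriv t)
    rw [hquadA ((NormedSpace.exp ((-t) • K)).mulVec z₁)] at h
    exact h
  have hval := integral_Ioi_of_hasDerivAt_of_tendsto' (fun x _ => (hfd x)) hint hftend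
  simp only [hzb0] at hval
  constructor
  · refine ⟨?_, hzb0, hzb_tendsto, ?_⟩
    · intro t ht
      have h := (hzb_deriv t).hasDerivWithinAt (s := Set.Ici 0)
      have hde : ∀ x : Fin n → ℝ,
          -(K.mulVec x) = -(A.mulVec x) - B.mulVec (-(k.mulVec x)) := by
        intro x
        rw [hKdef, hkdef]
        simp only [Matrix.sub_mulVec, Matrix.mulVec_neg, Matrix.mulVec_mulVec,
          sub_neg_eq_add, Matrix.mul_assoc]
        abel
      rw [← hde]
      exact h
    · rw [hval]
      ring
  · -- part (b)
    intro z v hz hv hz0 hzlim hintL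
    obtain ⟨c, hc0, hc⟩ := pdLower hn hQ
    obtain ⟨Ck, hCk0, hCk⟩ := quadBoundAbs (kᵀ * (R * k))
    have hzd : ∀ t ∈ Set.Ioi (0:ℝ),
        HasDerivAt z (-(A.mulVec (z t)) - B.mulVec (v t)) t := fun t ht =>
      (hz t (Set.mem_Ici.mpr (le_of_lt ht))).hasDerivAt (Ici_mem_nhds ht)
    have hzcont : ContinuousOn z (Set.Ici 0) := fun t ht => (hz t ht).continuousWithinAt
    have hkRk : kᵀ * (R * k) = N * B * R⁻¹ * Bᵀ * N := by
      rw [hRk, hkdef]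
      simp [Matrix.transpose_mul, hNsymm, hRiT, Matrix.mul_assoc]
    have hAN : Aᵀ * N + N * A = -Q + kᵀ * (R * k) := by
      rw [hkRk, ← hARE]; abel
    have hquadB : ∀ (x : Fin n → ℝ) (u : Fin m → ℝ),
        N.mulVec (-(A.mulVec x) - B.mulVec u) ⬝ᵥ x + N.mulVec x ⬝ᵥ (-(A.mulVec x) - B.mulVec u)
          = (Q.mulVec x ⬝ᵥ x + R.mulVec u ⬝ᵥ u)
              - R.mulVec (u + k.mulVec x) ⬝ᵥ (u + k.mulVec x) := by
      intro x u
      have sAN : (Aᵀ*N).mulVec x ⬝ᵥ x + (N*A).mulVec x ⬝ᵥ x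
          = -(Q.mulVec x ⬝ᵥ x) + (kᵀ*(R*k)).mulVec x ⬝ᵥ x := by
        have := congrArg (fun P : Matrix (Fin n) (Fin n) ℝ => P.mulVec x ⬝ᵥ x) hAN
        simpa [Matrix.add_mulVec, add_dotProduct, Matrix.neg_mulVec,
          neg_dotProduct] using this
      have e1 : (Aᵀ*N).mulVec x ⬝ᵥ x = N.mulVec x ⬝ᵥ A.mulVec x := by
        rw [← Matrix.mulVec_mulVec]; exact trDot A (N.mulVec x) x
      have e2 : (kᵀ*(R*k)).mulVec x ⬝ᵥ x = R.mulVec (k.mulVec x) ⬝ᵥ k.mulVec x := by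
        rw [← Matrix.mulVec_mulVec, trDot, ← Matrix.mulVec_mulVec]
      have e3 : N.mulVec x ⬝ᵥ B.mulVec u = (Bᵀ*N).mulVec x ⬝ᵥ u := by
        rw [← Matrix.mulVec_mulVec]; exact (trDot B (N.mulVec x) u).symm
      have e4 : (N*B).mulVec u ⬝ᵥ x = u ⬝ᵥ (Bᵀ*N).mulVec x := by
        have hNB : N*B = (Bᵀ*N)ᵀ := by
          rw [Matrix.transpose_mul, Matrix.transpose_transpose, hNsymm]
        rw [hNB]; exact trDot (Bᵀ*N) u x
      have e5 : R.mulVec (k.mulVec x) = (Bᵀ*N).mulVec x := by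
        rw [Matrix.mulVec_mulVec, hRk]
      have e6 : R.mulVec u ⬝ᵥ k.mulVec x = u ⬝ᵥ (Bᵀ*N).mulVec x := by
        calc R.mulVec u ⬝ᵥ k.mulVec x = Rᵀ.mulVec u ⬝ᵥ k.mulVec x := by rw [hRsym]
          _ = u ⬝ᵥ R.mulVec (k.mulVec x) := trDot R u (k.mulVec x)
          _ = u ⬝ᵥ (Bᵀ*N).mulVec x := by rw [e5]
      have e9 : (Bᵀ*N).mulVec x ⬝ᵥ u = u ⬝ᵥ (Bᵀ*N).mulVec x := dotProduct_comm _ _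
      simp only [Matrix.mulVec_add, Matrix.mulVec_sub, Matrix.mulVec_neg,
        add_dotProduct, dotProduct_add, neg_dotProduct,
        dotProduct_neg, sub_dotProduct, dotProduct_sub,
        Matrix.mulVec_mulVec] at e1 e2 e3 e4 e6 sAN ⊢
      rw [hRk] at e2 sAN ⊢
      linarith [sAN, e1, e2, e3, e4, e6, e9]
    have hwcont : ContinuousOn (fun t => v t + k.mulVec (z t)) (Set.Ioi 0) :=
      ((hv.mono Set.Ioi_subset_Ici_self).add
        (hkc.comp_continuousOn (hzcont.mono Set.Ioi_subset_Ici_self)))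
    have hintIoi : IntegrableOn (fun t => Q.mulVec (z t) ⬝ᵥ z t + R.mulVec (v t) ⬝ᵥ v t)
        (Set.Ioi 0) := hintL.mono_set Set.Ioi_subset_Ici_self
    have hzcontI : ContinuousOn z (Set.Ioi 0) := hzcont.mono Set.Ioi_subset_Ici_self
    have hvcontI : ContinuousOn v (Set.Ioi 0) := hv.mono Set.Ioi_subset_Ici_self
    have hQz_int : IntegrableOn (fun t => Q.mulVec (z t) ⬝ᵥ z t) (Set.Ioi 0) := by
      apply Integrable.mono' hintIoi
        (((quadCont Q).comp_continuousOn hzcontI).aestronglyMeasurable measurableSet_Ioi)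
      filter_upwards [] with t
      simp only [Function.comp_apply]
      rw [Real.norm_eq_abs, abs_of_nonneg (psdNonneg hQ.posSemidef _)]
      have := psdNonneg hR.posSemidef (v t)
      linarith
    have hRv_int : IntegrableOn (fun t => R.mulVec (v t) ⬝ᵥ v t) (Set.Ioi 0) := by
      apply Integrable.mono' hintIoi
        (((quadCont R).comp_continuousOn hvcontI).aestronglyMeasurable measurableSet_Ioi)
      filter_upwards [] with t
      simp only [Function.comp_apply]
      rw [Real.norm_eq_abs, abs_of_nonneg (psdNonneg hR.posSemidef _)]
      have := psdNonneg hQ.posSemidef (z t)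
      linarith
    have hzz_int : IntegrableOn (fun t => z t ⬝ᵥ z t) (Set.Ioi 0) := by
      apply Integrable.mono' (hQz_int.const_mul c⁻¹)
        ((dotSelfCont.comp_continuousOn hzcontI).aestronglyMeasurable measurableSet_Ioi)
      filter_upwards [] with t
      simp only [Function.comp_apply]
      rw [Real.norm_eq_abs, abs_of_nonneg (dotSelf_nonneg _)]
      have h := mul_le_mul_of_nonneg_left (hc (z t)) (inv_nonneg.2 hc0.le)
      rw [← mul_assoc, inv_mul_cancel₀ hc0.ne', one_mul] at h
      exact h
    have hkz_int : IntegrableOn (fun t => R.mulVec (k.mulVec (z t)) ⬝ᵥ k.mulVec (z t))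
        (Set.Ioi 0) := by
      apply Integrable.mono' (hzz_int.const_mul Ck)
        (((quadCont R).comp_continuousOn
          (hkc.comp_continuousOn hzcontI)).aestronglyMeasurable measurableSet_Ioi)
      filter_upwards [] with t
      simp only [Function.comp_apply]
      rw [Real.norm_eq_abs, abs_of_nonneg (psdNonneg hR.posSemidef _)]
      have e2 : (kᵀ*(R*k)).mulVec (z t) ⬝ᵥ (z t)
          = R.mulVec (k.mulVec (z t)) ⬝ᵥ k.mulVec (z t) := by
        rw [← Matrix.mulVec_mulVec, trDot, ← Matrix.mulVec_mulVec]
      rw [← e2]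
      exact (le_abs_self _).trans (hCk _)
    have hW_int : IntegrableOn
        (fun t => R.mulVec (v t + k.mulVec (z t)) ⬝ᵥ (v t + k.mulVec (z t))) (Set.Ioi 0) := by
      apply Integrable.mono' ((hRv_int.const_mul 2).add (hkz_int.const_mul 2))
        (((quadCont R).comp_continuousOn hwcont).aestronglyMeasurable measurableSet_Ioi)
      filter_upwards [] with t
      simp only [Function.comp_apply, Pi.add_apply]
      rw [Real.norm_eq_abs, abs_of_nonneg (psdNonneg hR.posSemidef _)]
      exact psdAddBound hR.posSemidef (v t) (k.mulVec (z t))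
    have hD_int : IntegrableOn (fun t =>
        (Q.mulVec (z t) ⬝ᵥ z t + R.mulVec (v t) ⬝ᵥ v t)
          - R.mulVec (v t + k.mulVec (z t)) ⬝ᵥ (v t + k.mulVec (z t))) (Set.Ioi 0) :=
      hintIoi.sub hW_int
    have hfdz : ∀ t ∈ Set.Ioi (0:ℝ),
        HasDerivAt (fun s => N.mulVec (z s) ⬝ᵥ z s)
          ((Q.mulVec (z t) ⬝ᵥ z t + R.mulVec (v t) ⬝ᵥ v t)
            - R.mulVec (v t + k.mulVec (z t)) ⬝ᵥ (v t + k.mulVec (z t))) t := by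
      intro t ht
      have h := quadDeriv N (hzd t ht)
      rw [hquadB (z t) (v t)] at h
      exact h
    have hcont0 : ContinuousWithinAt (fun s => N.mulVec (z s) ⬝ᵥ z s) (Set.Ici 0) 0 :=
      ((quadCont N).continuousAt).comp_continuousWithinAt
        ((hz 0 Set.self_mem_Ici).continuousWithinAt)
    have hftendz : Filter.Tendsto (fun s => N.mulVec (z s) ⬝ᵥ z s) Filter.atTop (nhds 0) := by
      have h := ((quadCont N).tendsto 0).comp hzlim
      simpa only [Function.comp_def, Matrix.mulVec_zero, dotProduct_zero] using h
    have hvalz := integral_Ioi_of_hasDerivAt_of_tendsto hcont0 hfdz hD_int hftendz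
    simp only [hz0] at hvalz
    have hmono : (∫ t in Set.Ioi (0:ℝ),
          ((Q.mulVec (z t) ⬝ᵥ z t + R.mulVec (v t) ⬝ᵥ v t)
            - R.mulVec (v t + k.mulVec (z t)) ⬝ᵥ (v t + k.mulVec (z t))))
        ≤ ∫ t in Set.Ioi (0:ℝ), (Q.mulVec (z t) ⬝ᵥ z t + R.mulVec (v t) ⬝ᵥ v t) := by
      apply setIntegral_mono_on hD_int hintIoi measurableSet_Ioi
      intro t ht
      have := psdNonneg hR.posSemidef (v t + k.mulVec (z t))
      linarith
    rw [hvalz] at hmono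
    linarith
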